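/- In the metric space Heis_7 = {(w_0,w) ∈ H × H : tr w_0 = n(w)} ⊂ ∂∞H²_H with the Cygan distance, for a finite chain C contained in the horizontal subspace {(ζ,u) : u = 0} given as the Euclidean sphere of radius R centered at the origin, the diameter of C for the Cygan distance equals √2 times its diameter for the modified Cygan distance. -/
import Mathlib


noncomputable section

open Quaternion

variable (n : ℕ)

def qIm (x : Quaternion ℝ) : Quaternion ℝ := (x - star x) / 2

def qDot (ζ ζ' : Fin (n - 1) → Quaternion ℝ) : Quaternion ℝ :=
  ∑ p, star (ζ p) * ζ' p

/-- The group law `(ζ,u)(ζ',u') = (ζ+ζ', u+u'+2 Im(conj(ζ)·ζ'))`. -/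
def heisNMul (p q : (Fin (n - 1) → Quaternion ℝ) × Quaternion ℝ) :
    (Fin (n - 1) → Quaternion ℝ) × Quaternion ℝ :=
  (p.1 + q.1, p.2 + q.2 + 2 * qIm (qDot n p.1 q.1))

/-- The Cygan distance: left-invariant, with `d_Cyg((ζ,u),0) = (n(ζ)²+n(u))^{1/4}`. -/
def dCyg (x y : (Fin (n - 1) → Quaternion ℝ) × Quaternion ℝ) : ℝ :=
  ((∑ i, normSq ((heisNMul n (-x.1, -x.2) y).1 i)) ^ 2
      + normSq (heisNMul n (-x.1, -x.2) y).2) ^ ((1 : ℝ) / 4)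

/-- The modified Cygan distance: left-invariant, with
`d''_Cyg((ζ,u),0) = (n(ζ)²+n(u))^{1/2} / ((n(ζ)²+n(u))^{1/2}+n(ζ))^{1/2}`. -/
def dCyg'' (x y : (Fin (n - 1) → Quaternion ℝ) × Quaternion ℝ) : ℝ :=
  (((∑ i, normSq ((heisNMul n (-x.1, -x.2) y).1 i)) ^ 2
      + normSq (heisNMul n (-x.1, -x.2) y).2) ^ ((1 : ℝ) / 2)) /
    ((((∑ i, normSq ((heisNMul n (-x.1, -x.2) y).1 i)) ^ 2
        + normSq (heisNMul n (-x.1, -x.2) y).2) ^ ((1 : ℝ) / 2)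
      + ∑ i, normSq ((heisNMul n (-x.1, -x.2) y).1 i)) ^ ((1 : ℝ) / 2))

/-- The horizontal chain of radius `R` centered at the origin:
the Euclidean sphere `{(ζ,0) : n(ζ) = R²}` in `Heis = ℍ^{n-1} × Im ℍ`. -/
def horizChain (R : ℝ) : Set ((Fin (n - 1) → Quaternion ℝ) × Quaternion ℝ) :=
  {p | (∑ i, normSq (p.1 i)) = R ^ 2 ∧ p.2 = 0}

/-! ### Auxiliary lemmas -/

lemma aux_two_coe : (2 : Quaternion ℝ) = ((2:ℝ) : Quaternion ℝ) := rfl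

lemma aux_qim_smul (x : Quaternion ℝ) : qIm x = (2⁻¹:ℝ) • (x - star x) := by
  rw [qIm, div_eq_mul_inv, aux_two_coe, ← Quaternion.coe_inv, Quaternion.mul_coe_eq_smul]

lemma aux_normSq_qim (x : Quaternion ℝ) : normSq (qIm x) = normSq x - x.re^2 := by
  rw [aux_qim_smul]
  simp [Quaternion.normSq_def']
  ring

lemma aux_qim_neg (x : Quaternion ℝ) : qIm (-x) = - qIm x := by
  simp only [aux_qim_smul, star_neg, ← smul_neg]
  congr 1
  abel

lemma aux_qim_coe (r : ℝ) : qIm ((r : Quaternion ℝ)) = 0 := by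
  rw [qIm, Quaternion.star_coe, sub_self, zero_div]

lemma aux_normSq_two_mul (a : Quaternion ℝ) : normSq (2 * a) = 4 * normSq a := by
  rw [show (2 : Quaternion ℝ) * a = (2:ℝ) • a from Quaternion.coe_mul_eq_smul 2 a,
    Quaternion.normSq_smul]
  norm_num

lemma aux_normSq_sub' (a b : Quaternion ℝ) :
    normSq (b - a) = normSq a + normSq b - 2 * (star a * b).re := by
  simp [Quaternion.normSq_def', Quaternion.re_mul]
  ring

lemma aux_sum_re {α : Type*} (s : Finset α) (f : α → Quaternion ℝ) :
    (∑ i ∈ s, f i).re = ∑ i ∈ s, (f i).re := by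
  induction s using Finset.cons_induction with
  | empty => rfl
  | cons a s ha ih => simp [Finset.sum_cons, ih]

lemma aux_qdot_neg (x1 y1 : Fin (n-1) → Quaternion ℝ) :
    qDot n (-x1) y1 = -(qDot n x1 y1) := by
  simp [qDot, neg_mul]

lemma aux_cs (x1 y1 : Fin (n-1) → Quaternion ℝ) :
    normSq (qDot n x1 y1) ≤ (∑ i, normSq (x1 i)) * (∑ i, normSq (y1 i)) := by
  have h1 : ‖qDot n x1 y1‖ ≤ ∑ i, ‖x1 i‖ * ‖y1 i‖ := by
    refine (norm_sum_le _ _).trans_eq ?_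
    simp [norm_mul]
  have h2 : (∑ i, ‖x1 i‖ * ‖y1 i‖)^2 ≤ (∑ i, ‖x1 i‖^2) * (∑ i, ‖y1 i‖^2) :=
    Finset.sum_mul_sq_le_sq_mul_sq _ _ _
  have h3 : normSq (qDot n x1 y1) = ‖qDot n x1 y1‖^2 := by
    rw [Quaternion.normSq_eq_norm_mul_self]; ring
  rw [h3]
  calc ‖qDot n x1 y1‖^2 ≤ (∑ i, ‖x1 i‖*‖y1 i‖)^2 :=
        pow_le_pow_left₀ (norm_nonneg _) h1 2
    _ ≤ (∑ i, ‖x1 i‖^2) * (∑ i, ‖y1 i‖^2) := h2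
    _ = (∑ i, normSq (x1 i)) * (∑ i, normSq (y1 i)) := by
        simp [Quaternion.normSq_eq_norm_mul_self, sq]

lemma key_bounds (x1 y1 : Fin (n-1) → Quaternion ℝ) (R : ℝ) (hR : 0 < R)
    (hx : ∑ i, normSq (x1 i) = R^2) (hy : ∑ i, normSq (y1 i) = R^2) :
    (∑ i, normSq ((-x1 + y1) i)) ≤ 4*R^2 ∧
    (∑ i, normSq ((-x1 + y1) i))^2 + normSq (2 * qIm (qDot n (-x1) y1))
      ≤ 4*R^2 * (∑ i, normSq ((-x1 + y1) i)) := by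
  set q := qDot n x1 y1 with hq
  set a := q.re with ha
  set c := normSq q with hc
  have h1 : (∑ i, normSq ((-x1 + y1) i)) = 2*R^2 - 2*a := by
    have : ∀ i, normSq ((-x1 + y1) i)
        = normSq (x1 i) + normSq (y1 i) - 2 * (star (x1 i) * y1 i).re := by
      intro i
      rw [Pi.add_apply, Pi.neg_apply, neg_add_eq_sub, aux_normSq_sub']
    rw [Finset.sum_congr rfl fun i _ => this i]
    rw [Finset.sum_sub_distrib, Finset.sum_add_distrib, hx, hy, ← Finset.mul_sum,
      ha, hq, qDot, aux_sum_re]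
    ring
  have h2 : normSq (2 * qIm (qDot n (-x1) y1)) = 4*(c - a^2) := by
    rw [aux_qdot_neg, aux_qim_neg, mul_neg, normSq_neg, aux_normSq_two_mul,
      aux_normSq_qim, ← hq, ← ha, ← hc]
  have h3 : a^2 ≤ c := by
    have : (0:ℝ) ≤ normSq (qIm q) := normSq_nonneg
    rw [aux_normSq_qim] at this
    linarith
  have h4 : c ≤ R^2 * R^2 := by
    rw [hc, hq]
    calc normSq (qDot n x1 y1) ≤ (∑ i, normSq (x1 i)) * (∑ i, normSq (y1 i)) :=
          aux_cs n x1 y1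
      _ = R^2 * R^2 := by rw [hx, hy]
  constructor
  · rw [h1]; nlinarith [sq_nonneg R, sq_nonneg (a + R^2)]
  · rw [h1, h2]; nlinarith [sq_nonneg R, sq_nonneg (a + R^2)]

/-- the main inequality for the modified Cygan distance squared -/
lemma aux_ineq (R s t : ℝ) (hR : 0 < R) (hs : 0 ≤ s) (ht : 0 ≤ t)
    (hs2 : s ≤ 2*R*t) (ht2 : t ≤ 2*R) : s^2 ≤ 2*R^2*s + 2*R^2*t^2 := by
  nlinarith [mul_nonneg hs (sub_nonneg.2 ht2), mul_nonneg ht (sub_nonneg.2 hs2),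
    mul_nonneg (sub_nonneg.2 hs2) hs]

lemma aux_bound1 (R F G : ℝ) (hR : 0 < R) (hF0 : 0 ≤ F) (hG0 : 0 ≤ G)
    (hF1 : F ≤ 4*R^2) (hF2 : F^2 + G ≤ 4*R^2*F) :
    (F^2 + G) ^ ((1:ℝ)/4) ≤ 2*R := by
  have hA : F^2 + G ≤ 16*R^4 := by nlinarith
  calc (F^2 + G) ^ ((1:ℝ)/4) ≤ (16*R^4) ^ ((1:ℝ)/4) :=
        Real.rpow_le_rpow (by positivity) hA (by norm_num)
    _ = 2*R := by
        rw [show 16*R^4 = (2*R)^(4:ℕ) by ring, ← Real.rpow_natCast (2*R) 4,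
          ← Real.rpow_mul (by positivity)]
        norm_num

lemma aux_bound2 (R F G : ℝ) (hR : 0 < R) (hF0 : 0 ≤ F) (hG0 : 0 ≤ G)
    (hF1 : F ≤ 4*R^2) (hF2 : F^2 + G ≤ 4*R^2*F) :
    (F^2 + G) ^ ((1:ℝ)/2) / ((F^2 + G) ^ ((1:ℝ)/2) + F) ^ ((1:ℝ)/2)
      ≤ Real.sqrt 2 * R := by
  have hA0 : 0 ≤ F^2 + G := by positivity
  rw [← Real.sqrt_eq_rpow, ← Real.sqrt_eq_rpow]
  set s := Real.sqrt (F^2 + G) with hsdef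
  have hs0 : 0 ≤ s := Real.sqrt_nonneg _
  have hssq : s^2 = F^2 + G := Real.sq_sqrt hA0
  set t := Real.sqrt F with htdef
  have ht0 : 0 ≤ t := Real.sqrt_nonneg _
  have htsq : t^2 = F := Real.sq_sqrt hF0
  have hst : s ≤ 2*R*t := by
    have h1 : s^2 ≤ (2*R*t)^2 := by
      rw [hssq, mul_pow, mul_pow, htsq]; nlinarith
    have h2 := Real.sqrt_le_sqrt h1
    rwa [Real.sqrt_sq hs0, Real.sqrt_sq (mul_nonneg (by linarith) ht0)] at h2
  have ht2R : t ≤ 2*R := by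
    have := Real.sqrt_le_sqrt hF1
    rwa [show (4:ℝ)*R^2 = (2*R)^2 by ring, Real.sqrt_sq (by positivity)] at this
  have hkey : F^2 + G ≤ 2*R^2*s + 2*R^2*F := by
    have := aux_ineq R s t hR hs0 ht0 hst ht2R
    rw [hssq, htsq] at this
    linarith
  rcases eq_or_lt_of_le hA0 with hA0' | hA0'
  · have hs : s = 0 := by rw [hsdef, ← hA0', Real.sqrt_zero]
    rw [hs, zero_div]
    positivity
  · have hspos : 0 < s := Real.sqrt_pos.2 hA0'
    have hden : 0 < Real.sqrt (s + F) := Real.sqrt_pos.2 (by linarith)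
    rw [div_le_iff₀ hden]
    have heq : Real.sqrt 2 * R * Real.sqrt (s + F) = Real.sqrt (2*R^2*(s+F)) := by
      rw [Real.sqrt_mul (by positivity : (0:ℝ) ≤ 2*R^2), Real.sqrt_mul (by norm_num : (0:ℝ) ≤ 2),
        Real.sqrt_sq hR.le]
    rw [heq, Real.le_sqrt hs0 (by positivity)]
    nlinarith [hssq, hkey]

/-- For a finite chain `C` contained in the horizontal subspace, given as the Euclidean
sphere of radius `R` centered at the origin, the diameter of `C` for the Cygan distance
equals `√2` times its diameter for the modified Cygan distance. -/
theorem chain_diameter_cygan_eq_sqrt_two_mul_modified (hn : 2 ≤ n) (R : ℝ) (hR : 0 < R) :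
    sSup {r : ℝ | ∃ x ∈ horizChain n R, ∃ y ∈ horizChain n R, r = dCyg n x y}
      = Real.sqrt 2 *
        sSup {r : ℝ | ∃ x ∈ horizChain n R, ∃ y ∈ horizChain n R, r = dCyg'' n x y} := by
  -- the witness pair of antipodal points
  have hn1 : 0 < n - 1 := by omega
  set i0 : Fin (n-1) := ⟨0, hn1⟩ with hi0
  set ζ0 : Fin (n-1) → Quaternion ℝ := fun i => if i = i0 then ((R:ℝ) : Quaternion ℝ) else 0
    with hζ0
  set px : (Fin (n - 1) → Quaternion ℝ) × Quaternion ℝ := (ζ0, 0) with hpx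
  set py : (Fin (n - 1) → Quaternion ℝ) × Quaternion ℝ := (-ζ0, 0) with hpy
  have hxmem : px ∈ horizChain n R := by
    constructor
    · simp only [hpx, hζ0, apply_ite normSq, Quaternion.normSq_coe, map_zero]
      rw [Finset.sum_ite_eq' Finset.univ i0]
      simp
    · rfl
  have hymem : py ∈ horizChain n R := by
    constructor
    · simp only [hpy, hpx, Pi.neg_apply, normSq_neg, hζ0, apply_ite normSq,
        Quaternion.normSq_coe, map_zero]
      rw [Finset.sum_ite_eq' Finset.univ i0]
      simp
    · rfl
  -- computing the mul for the witness pair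
  have hmul1 : (heisNMul n (-px.1, -px.2) py).1 = fun i => if i = i0 then
      ((-2*R : ℝ) : Quaternion ℝ) else 0 := by
    funext i
    simp only [heisNMul, hpx, hpy, Pi.add_apply, Pi.neg_apply, hζ0]
    by_cases h : i = i0 <;> simp [h]
    · ext <;> simp <;> ring
  have hdot : qDot n (-px.1) py.1 = ((R^2 : ℝ) : Quaternion ℝ) := by
    simp only [qDot, hpx, hpy, Pi.neg_apply, star_neg, neg_mul, mul_neg, neg_neg, hζ0]
    have hterm : ∀ i : Fin (n-1), star (if i = i0 then ((R:ℝ):Quaternion ℝ) else 0) *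
        (if i = i0 then ((R:ℝ):Quaternion ℝ) else 0) =
        if i = i0 then ((R^2:ℝ):Quaternion ℝ) else 0 := fun i => by
      by_cases h : i = i0 <;> simp [h, Quaternion.star_coe, ← Quaternion.coe_mul, sq]
    rw [Finset.sum_congr rfl fun i _ => hterm i, Finset.sum_ite_eq' Finset.univ i0]
    simp
  have hmul2 : (heisNMul n (-px.1, -px.2) py).2 = 0 := by
    simp only [heisNMul, hdot, aux_qim_coe, mul_zero]
    simp [hpx, hpy]
  have hFval : (∑ i, normSq ((heisNMul n (-px.1, -px.2) py).1 i)) = 4*R^2 := by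
    rw [hmul1]
    simp only [apply_ite normSq, Quaternion.normSq_coe, map_zero]
    rw [Finset.sum_ite_eq' Finset.univ i0]
    simp
    ring
  have hd1 : dCyg n px py = 2*R := by
    rw [dCyg, hFval, hmul2, map_zero, add_zero]
    rw [show (4*R^2)^2 = (2*R)^(4:ℕ) by ring, ← Real.rpow_natCast (2*R) 4,
      ← Real.rpow_mul (by positivity)]
    norm_num
  have hd2 : dCyg'' n px py = Real.sqrt 2 * R := by
    rw [dCyg'', hFval, hmul2, map_zero, add_zero]
    have h2 : Real.sqrt 2 * Real.sqrt 2 = 2 := Real.mul_self_sqrt (by norm_num)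
    rw [← Real.sqrt_eq_rpow, ← Real.sqrt_eq_rpow]
    rw [show (4*R^2)^2 = ((4*R^2))^2 from rfl, Real.sqrt_sq (by positivity)]
    rw [show 4*R^2 + 4*R^2 = (2*R)^2*2 by ring, Real.sqrt_mul (by positivity),
      Real.sqrt_sq (by positivity)]
    rw [div_eq_iff (by positivity)]
    linear_combination (-2*R^2) * h2
  -- upper bounds
  have hub1 : ∀ x ∈ horizChain n R, ∀ y ∈ horizChain n R, dCyg n x y ≤ 2*R := by
    rintro x ⟨hx1, hx2⟩ y ⟨hy1, hy2⟩
    obtain ⟨hF1, hF2⟩ := key_bounds n x.1 y.1 R hR hx1 hy1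
    have hF0 : 0 ≤ ∑ i, normSq ((-x.1 + y.1) i) :=
      Finset.sum_nonneg fun i _ => normSq_nonneg
    have hGnn : (0:ℝ) ≤ normSq (2 * qIm (qDot n (-x.1) y.1)) := normSq_nonneg
    have he1 : (heisNMul n (-x.1, -x.2) y).1 = -x.1 + y.1 := rfl
    have he2 : (heisNMul n (-x.1, -x.2) y).2 = 2 * qIm (qDot n (-x.1) y.1) := by
      simp [heisNMul, hx2, hy2]
    rw [dCyg, he1, he2]
    exact aux_bound1 R _ _ hR hF0 hGnn hF1 hF2
  have hub2 : ∀ x ∈ horizChain n R, ∀ y ∈ horizChain n R, dCyg'' n x y ≤ Real.sqrt 2 * R := by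
    rintro x ⟨hx1, hx2⟩ y ⟨hy1, hy2⟩
    obtain ⟨hF1, hF2⟩ := key_bounds n x.1 y.1 R hR hx1 hy1
    have hF0 : 0 ≤ ∑ i, normSq ((-x.1 + y.1) i) :=
      Finset.sum_nonneg fun i _ => normSq_nonneg
    have hGnn : (0:ℝ) ≤ normSq (2 * qIm (qDot n (-x.1) y.1)) := normSq_nonneg
    have he1 : (heisNMul n (-x.1, -x.2) y).1 = -x.1 + y.1 := rfl
    have he2 : (heisNMul n (-x.1, -x.2) y).2 = 2 * qIm (qDot n (-x.1) y.1) := by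
      simp [heisNMul, hx2, hy2]
    rw [dCyg'', he1, he2]
    exact aux_bound2 R _ _ hR hF0 hGnn hF1 hF2
  -- conclude about the sups
  have hmem1 : (2*R) ∈ {r : ℝ | ∃ x ∈ horizChain n R, ∃ y ∈ horizChain n R, r = dCyg n x y} :=
    ⟨px, hxmem, py, hymem, hd1.symm⟩
  have hmem2 : (Real.sqrt 2 * R) ∈
      {r : ℝ | ∃ x ∈ horizChain n R, ∃ y ∈ horizChain n R, r = dCyg'' n x y} :=
    ⟨px, hxmem, py, hymem, hd2.symm⟩
  have hbd1 : ∀ r ∈ {r : ℝ | ∃ x ∈ horizChain n R, ∃ y ∈ horizChain n R, r = dCyg n x y},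
      r ≤ 2*R := by
    rintro r ⟨x, hx, y, hy, rfl⟩; exact hub1 x hx y hy
  have hbd2 : ∀ r ∈ {r : ℝ | ∃ x ∈ horizChain n R, ∃ y ∈ horizChain n R, r = dCyg'' n x y},
      r ≤ Real.sqrt 2 * R := by
    rintro r ⟨x, hx, y, hy, rfl⟩; exact hub2 x hx y hy
  have hs1 : sSup {r : ℝ | ∃ x ∈ horizChain n R, ∃ y ∈ horizChain n R, r = dCyg n x y}
      = 2*R :=
    le_antisymm (csSup_le ⟨_, hmem1⟩ hbd1) (le_csSup ⟨2*R, hbd1⟩ hmem1)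
  have hs2 : sSup {r : ℝ | ∃ x ∈ horizChain n R, ∃ y ∈ horizChain n R, r = dCyg'' n x y}
      = Real.sqrt 2 * R :=
    le_antisymm (csSup_le ⟨_, hmem2⟩ hbd2) (le_csSup ⟨Real.sqrt 2 * R, hbd2⟩ hmem2)
  rw [hs1, hs2, ← mul_assoc, Real.mul_self_sqrt (by norm_num)]
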